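/- For any two orthonormal vectors u, v ∈ ℝ^8, the cross product determines an almost complex structure on the orthogonal complement of span{u,v}: the linear map J : w ↦ P(u,v,w) maps the orthogonal complement of span{u,v} into itself, and J(J(w)) = −w for every w orthogonal to both u and v. -/

import Mathlib

open RealInnerProductSpace

noncomputable section

/-- Euclidean space `ℝ^8`. -/
abbrev E8 : Type := EuclideanSpace ℝ (Fin 8)

/-- The standard orthonormal basis vectors `e_0, …, e_7` of `ℝ^8`. -/
def e (i : Fin 8) : E8 := EuclideanSpace.single i 1

/-- The elementary alternating 4-form `e^i ∧ e^j ∧ e^k ∧ e^l` evaluated on `(u,v,w,x)`. -/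
def wedge4 (i j k l : Fin 8) (u v w x : E8) : ℝ :=
  Matrix.det !![u i, u j, u k, u l;
                v i, v j, v k, v l;
                w i, w j, w k, w l;
                x i, x j, x k, x l]

/-- The standard `Spin(7)`-form `φ₀` on `ℝ^8`:
`φ₀ = e^{0145}+e^{0167}+e^{2345}+e^{2367}+e^{0246}−e^{0257}−e^{1346}+e^{1357}
     −e^{0347}−e^{0356}−e^{1247}−e^{1256}+e^{0123}+e^{4567}`. -/
def phi0 (u v w x : E8) : ℝ :=
    wedge4 0 1 4 5 u v w x + wedge4 0 1 6 7 u v w x + wedge4 2 3 4 5 u v w x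
  + wedge4 2 3 6 7 u v w x + wedge4 0 2 4 6 u v w x - wedge4 0 2 5 7 u v w x
  - wedge4 1 3 4 6 u v w x + wedge4 1 3 5 7 u v w x - wedge4 0 3 4 7 u v w x
  - wedge4 0 3 5 6 u v w x - wedge4 1 2 4 7 u v w x - wedge4 1 2 5 6 u v w x
  + wedge4 0 1 2 3 u v w x + wedge4 4 5 6 7 u v w x

/-- The triple cross product `P : ℝ^8 × ℝ^8 × ℝ^8 → ℝ^8`, determined by
`⟨P(u,v,w), x⟩ = φ₀(u,v,w,x)` for all `x ∈ ℝ^8`. -/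
def P (u v w : E8) : E8 :=
  (WithLp.equiv 2 (Fin 8 → ℝ)).symm (fun i => phi0 u v w (e i))

lemma wedge4_eq (i j k l : Fin 8) (u v w x : E8) : wedge4 i j k l u v w x =
    u i*v j*w k*x l - u i*v j*w l*x k - u i*v k*w j*x l + u i*v k*w l*x j
  + u i*v l*w j*x k - u i*v l*w k*x j - u j*v i*w k*x l + u j*v i*w l*x k
  + u j*v k*w i*x l - u j*v k*w l*x i - u j*v l*w i*x k + u j*v l*w k*x i
  + u k*v i*w j*x l - u k*v i*w l*x j - u k*v j*w i*x l + u k*v j*w l*x i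
  + u k*v l*w i*x j - u k*v l*w j*x i - u l*v i*w j*x k + u l*v i*w k*x j
  + u l*v j*w i*x k - u l*v j*w k*x i - u l*v k*w i*x j + u l*v k*w j*x i := by
  have a1 : (Fin.succAbove 1 2 : Fin 4) = 3 := rfl
  have a2 : (Fin.succAbove 2 2 : Fin 4) = 3 := rfl
  have a3 : (Fin.succAbove 3 2 : Fin 4) = 2 := rfl
  simp [wedge4, Matrix.det_succ_row_zero, Fin.sum_univ_succ, a1, a2, a3]
  ring

lemma P_app_0 (u v w : E8) : P u v w 0 =
    -u 1*v 2*w 3 + u 1*v 3*w 2 - u 1*v 4*w 5 + u 1*v 5*w 4 - u 1*v 6*w 7 + u 1*v 7*w 6 + u 2*v 1*w 3 - u 2*v 3*w 1 - u 2*v 4*w 6 + u 2*v 5*w 7 + u 2*v 6*w 4 - u 2*v 7*w 5 - u 3*v 1*w 2 + u 3*v 2*w 1 + u 3*v 4*w 7 + u 3*v 5*w 6 - u 3*v 6*w 5 - u 3*v 7*w 4 + u 4*v 1*w 5 + u 4*v 2*w 6 - u 4*v 3*w 7 - u 4*v 5*w 1 - u 4*v 6*w 2 + u 4*v 7*w 3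 - u 5*v 1*w 4 - u 5*v 2*w 7 - u 5*v 3*w 6 + u 5*v 4*w 1 + u 5*v 6*w 3 + u 5*v 7*w 2 + u 6*v 1*w 7 - u 6*v 2*w 4 + u 6*v 3*w 5 + u 6*v 4*w 2 - u 6*v 5*w 3 - u 6*v 7*w 1 - u 7*v 1*w 6 + u 7*v 2*w 5 + u 7*v 3*w 4 - u 7*v 4*w 3 - u 7*v 5*w 2 + u 7*v 6*w 1 := by
  simp [P, phi0, wedge4_eq, e, EuclideanSpace.single_apply]; ring
lemma P_app_1 (u v w : E8) : P u v w 1 =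
    u 0*v 2*w 3 - u 0*v 3*w 2 + u 0*v 4*w 5 - u 0*v 5*w 4 + u 0*v 6*w 7 - u 0*v 7*w 6 - u 2*v 0*w 3 + u 2*v 3*w 0 + u 2*v 4*w 7 + u 2*v 5*w 6 - u 2*v 6*w 5 - u 2*v 7*w 4 + u 3*v 0*w 2 - u 3*v 2*w 0 + u 3*v 4*w 6 - u 3*v 5*w 7 - u 3*v 6*w 4 + u 3*v 7*w 5 - u 4*v 0*w 5 - u 4*v 2*w 7 - u 4*v 3*w 6 + u 4*v 5*w 0 + u 4*v 6*w 3 + u 4*v 7*w 2 + u 5*v 0*w 4 - u 5*v 2*w 6 + u 5*v 3*w 7 - u 5*v 4*w 0 + u 5*v 6*w 2 - u 5*v 7*w 3 - u 6*v 0*w 7 + u 6*v 2*w 5 + u 6*v 3*w 4 - u 6*v 4*w 3 - u 6*v 5*w 2 + u 6*v 7*w 0 + u 7*v 0*w 6 + u 7*v 2*w 4 - u 7*v 3*w 5 - u 7*v 4*w 2 + u 7*v 5*w 3 - u 7*v 6*w 0 := by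
  simp [P, phi0, wedge4_eq, e, EuclideanSpace.single_apply]; ring
lemma P_app_2 (u v w : E8) : P u v w 2 =
    -u 0*v 1*w 3 + u 0*v 3*w 1 + u 0*v 4*w 6 - u 0*v 5*w 7 - u 0*v 6*w 4 + u 0*v 7*w 5 + u 1*v 0*w 3 - u 1*v 3*w 0 - u 1*v 4*w 7 - u 1*v 5*w 6 + u 1*v 6*w 5 + u 1*v 7*w 4 - u 3*v 0*w 1 + u 3*v 1*w 0 - u 3*v 4*w 5 + u 3*v 5*w 4 - u 3*v 6*w 7 + u 3*v 7*w 6 - u 4*v 0*w 6 + u 4*v 1*w 7 + u 4*v 3*w 5 - u 4*v 5*w 3 + u 4*v 6*w 0 - u 4*v 7*w 1 + u 5*v 0*w 7 + u 5*v 1*w 6 - u 5*v 3*w 4 + u 5*v 4*w 3 - u 5*v 6*w 1 - u 5*v 7*w 0 + u 6*v 0*w 4 - u 6*v 1*w 5 + u 6*v 3*w 7 - u 6*v 4*w 0 + u 6*v 5*w 1 - u 6*v 7*w 3 - u 7*v 0*w 5 - u 7*v 1*w 4 - u 7*v 3*w 6 + u 7*v 4*w 1 + u 7*v 5*w 0 +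 u 7*v 6*w 3 := by
  simp [P, phi0, wedge4_eq, e, EuclideanSpace.single_apply]; ring
lemma P_app_3 (u v w : E8) : P u v w 3 =
    u 0*v 1*w 2 - u 0*v 2*w 1 - u 0*v 4*w 7 - u 0*v 5*w 6 + u 0*v 6*w 5 + u 0*v 7*w 4 - u 1*v 0*w 2 + u 1*v 2*w 0 - u 1*v 4*w 6 + u 1*v 5*w 7 + u 1*v 6*w 4 - u 1*v 7*w 5 + u 2*v 0*w 1 - u 2*v 1*w 0 + u 2*v 4*w 5 - u 2*v 5*w 4 + u 2*v 6*w 7 - u 2*v 7*w 6 + u 4*v 0*w 7 + u 4*v 1*w 6 - u 4*v 2*w 5 + u 4*v 5*w 2 - u 4*v 6*w 1 - u 4*v 7*w 0 + u 5*v 0*w 6 - u 5*v 1*w 7 + u 5*v 2*w 4 - u 5*v 4*w 2 - u 5*v 6*w 0 + u 5*v 7*w 1 - u 6*v 0*w 5 - u 6*v 1*w 4 - u 6*v 2*w 7 + u 6*v 4*w 1 + u 6*v 5*w 0 + u 6*v 7*w 2 - u 7*v 0*w 4 + u 7*v 1*w 5 + u 7*v 2*w 6 + u 7*v 4*w 0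 - u 7*v 5*w 1 - u 7*v 6*w 2 := by
  simp [P, phi0, wedge4_eq, e, EuclideanSpace.single_apply]; ring
lemma P_app_4 (u v w : E8) : P u v w 4 =
    -u 0*v 1*w 5 - u 0*v 2*w 6 + u 0*v 3*w 7 + u 0*v 5*w 1 + u 0*v 6*w 2 - u 0*v 7*w 3 + u 1*v 0*w 5 + u 1*v 2*w 7 + u 1*v 3*w 6 - u 1*v 5*w 0 - u 1*v 6*w 3 - u 1*v 7*w 2 + u 2*v 0*w 6 - u 2*v 1*w 7 - u 2*v 3*w 5 + u 2*v 5*w 3 - u 2*v 6*w 0 + u 2*v 7*w 1 - u 3*v 0*w 7 - u 3*v 1*w 6 + u 3*v 2*w 5 - u 3*v 5*w 2 + u 3*v 6*w 1 + u 3*v 7*w 0 - u 5*v 0*w 1 + u 5*v 1*w 0 - u 5*v 2*w 3 + u 5*v 3*w 2 - u 5*v 6*w 7 + u 5*v 7*w 6 - u 6*v 0*w 2 + u 6*v 1*w 3 + u 6*v 2*w 0 - u 6*v 3*w 1 + u 6*v 5*w 7 - u 6*v 7*w 5 + u 7*v 0*w 3 + u 7*v 1*w 2 - u 7*v 2*w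 1 - u 7*v 3*w 0 - u 7*v 5*w 6 + u 7*v 6*w 5 := by
  simp [P, phi0, wedge4_eq, e, EuclideanSpace.single_apply]; ring
lemma P_app_5 (u v w : E8) : P u v w 5 =
    u 0*v 1*w 4 + u 0*v 2*w 7 + u 0*v 3*w 6 - u 0*v 4*w 1 - u 0*v 6*w 3 - u 0*v 7*w 2 - u 1*v 0*w 4 + u 1*v 2*w 6 - u 1*v 3*w 7 + u 1*v 4*w 0 - u 1*v 6*w 2 + u 1*v 7*w 3 - u 2*v 0*w 7 - u 2*v 1*w 6 + u 2*v 3*w 4 - u 2*v 4*w 3 + u 2*v 6*w 1 + u 2*v 7*w 0 - u 3*v 0*w 6 + u 3*v 1*w 7 - u 3*v 2*w 4 + u 3*v 4*w 2 + u 3*v 6*w 0 - u 3*v 7*w 1 + u 4*v 0*w 1 - u 4*v 1*w 0 + u 4*v 2*w 3 - u 4*v 3*w 2 + u 4*v 6*w 7 - u 4*v 7*w 6 + u 6*v 0*w 3 + u 6*v 1*w 2 - u 6*v 2*w 1 - u 6*v 3*w 0 - u 6*v 4*w 7 + u 6*v 7*w 4 + u 7*v 0*w 2 - u 7*v 1*w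 3 - u 7*v 2*w 0 + u 7*v 3*w 1 + u 7*v 4*w 6 - u 7*v 6*w 4 := by
  simp [P, phi0, wedge4_eq, e, EuclideanSpace.single_apply]; ring
lemma P_app_6 (u v w : E8) : P u v w 6 =
    -u 0*v 1*w 7 + u 0*v 2*w 4 - u 0*v 3*w 5 - u 0*v 4*w 2 + u 0*v 5*w 3 + u 0*v 7*w 1 + u 1*v 0*w 7 - u 1*v 2*w 5 - u 1*v 3*w 4 + u 1*v 4*w 3 + u 1*v 5*w 2 - u 1*v 7*w 0 - u 2*v 0*w 4 + u 2*v 1*w 5 - u 2*v 3*w 7 + u 2*v 4*w 0 - u 2*v 5*w 1 + u 2*v 7*w 3 + u 3*v 0*w 5 + u 3*v 1*w 4 + u 3*v 2*w 7 - u 3*v 4*w 1 - u 3*v 5*w 0 - u 3*v 7*w 2 + u 4*v 0*w 2 - u 4*v 1*w 3 - u 4*v 2*w 0 + u 4*v 3*w 1 - u 4*v 5*w 7 + u 4*v 7*w 5 - u 5*v 0*w 3 - u 5*v 1*w 2 + u 5*v 2*w 1 + u 5*v 3*w 0 + u 5*v 4*w 7 - u 5*v 7*w 4 - u 7*v 0*w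 1 + u 7*v 1*w 0 - u 7*v 2*w 3 + u 7*v 3*w 2 - u 7*v 4*w 5 + u 7*v 5*w 4 := by
  simp [P, phi0, wedge4_eq, e, EuclideanSpace.single_apply]; ring
lemma P_app_7 (u v w : E8) : P u v w 7 =
    u 0*v 1*w 6 - u 0*v 2*w 5 - u 0*v 3*w 4 + u 0*v 4*w 3 + u 0*v 5*w 2 - u 0*v 6*w 1 - u 1*v 0*w 6 - u 1*v 2*w 4 + u 1*v 3*w 5 + u 1*v 4*w 2 - u 1*v 5*w 3 + u 1*v 6*w 0 + u 2*v 0*w 5 + u 2*v 1*w 4 + u 2*v 3*w 6 - u 2*v 4*w 1 - u 2*v 5*w 0 - u 2*v 6*w 3 + u 3*v 0*w 4 - u 3*v 1*w 5 - u 3*v 2*w 6 - u 3*v 4*w 0 + u 3*v 5*w 1 + u 3*v 6*w 2 - u 4*v 0*w 3 - u 4*v 1*w 2 + u 4*v 2*w 1 + u 4*v 3*w 0 + u 4*v 5*w 6 - u 4*v 6*w 5 - u 5*v 0*w 2 + u 5*v 1*w 3 + u 5*v 2*w 0 - u 5*v 3*w 1 - u 5*v 4*w 6 + u 5*v 6*w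 4 + u 6*v 0*w 1 - u 6*v 1*w 0 + u 6*v 2*w 3 - u 6*v 3*w 2 + u 6*v 4*w 5 - u 6*v 5*w 4 := by
  simp [P, phi0, wedge4_eq, e, EuclideanSpace.single_apply]; ring

set_option maxRecDepth 100000 in
set_option maxHeartbeats 4000000 in
/-- For orthonormal `u, v`, the map `w ↦ P(u,v,w)` is an almost complex structure
on the orthogonal complement of `span{u,v}`. -/
theorem P_almost_complex_on_complement (u v : E8)
    (hu : ‖u‖ = 1) (hv : ‖v‖ = 1) (huv : ⟪u, v⟫ = 0) :
    ∀ w : E8, ⟪w, u⟫ = 0 → ⟪w, v⟫ = 0 →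
      ⟪P u v w, u⟫ = 0 ∧ ⟪P u v w, v⟫ = 0 ∧ P u v (P u v w) = -w := by
  intro w hwu hwv
  have hp : ⟪u, u⟫ = 1 := by rw [real_inner_self_eq_norm_mul_norm, hu]; norm_num
  have hq : ⟪v, v⟫ = 1 := by rw [real_inner_self_eq_norm_mul_norm, hv]; norm_num
  simp only [PiLp.inner_apply, RCLike.inner_apply, conj_trivial, Fin.sum_univ_eight]
    at hp hq huv hwu hwv
  refine ⟨?_, ?_, ?_⟩
  · simp only [PiLp.inner_apply, RCLike.inner_apply, conj_trivial, Fin.sum_univ_eight,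
      P_app_0, P_app_1, P_app_2, P_app_3, P_app_4, P_app_5, P_app_6, P_app_7]
    ring
  · simp only [PiLp.inner_apply, RCLike.inner_apply, conj_trivial, Fin.sum_univ_eight,
      P_app_0, P_app_1, P_app_2, P_app_3, P_app_4, P_app_5, P_app_6, P_app_7]
    ring
  · have h0 : P u v (P u v w) 0 = -(w 0) := by
      simp only [P_app_0, P_app_1, P_app_2, P_app_3, P_app_4, P_app_5, P_app_6, P_app_7]
      linear_combination (-(v 0*v 0+v 1*v 1+v 2*v 2+v 3*v 3+v 4*v 4+v 5*v 5+v 6*v 6+v 7*v 7)*w 0)*hp + (-(w 0))*hq + ((u 0*v 0+u 1*v 1+u 2*v 2+u 3*v 3+u 4*v 4+u 5*v 5+u 6*v 6+u 7*v 7)*w 0 - (w 0*v 0+w 1*v 1+w 2*v 2+w 3*v 3+w 4*v 4+w 5*v 5+w 6*v 6+w 7*v 7)*u 0 - (w 0*u 0+w 1*u 1+w 2*u 2+w 3*u 3+w 4*u 4+w 5*u 5+w 6*u 6+w 7*u 7)*v 0)*huv + ((v 0*v 0+v 1*v 1+v 2*v 2+v 3*v 3+v 4*v 4+v 5*v 5+v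 6*v 6+v 7*v 7)*u 0)*hwu + ((u 0*u 0+u 1*u 1+u 2*u 2+u 3*u 3+u 4*u 4+u 5*u 5+u 6*u 6+u 7*u 7)*v 0)*hwv
    have h1 : P u v (P u v w) 1 = -(w 1) := by
      simp only [P_app_0, P_app_1, P_app_2, P_app_3, P_app_4, P_app_5, P_app_6, P_app_7]
      linear_combination (-(v 0*v 0+v 1*v 1+v 2*v 2+v 3*v 3+v 4*v 4+v 5*v 5+v 6*v 6+v 7*v 7)*w 1)*hp + (-(w 1))*hq + ((u 0*v 0+u 1*v 1+u 2*v 2+u 3*v 3+u 4*v 4+u 5*v 5+u 6*v 6+u 7*v 7)*w 1 - (w 0*v 0+w 1*v 1+w 2*v 2+w 3*v 3+w 4*v 4+w 5*v 5+w 6*v 6+w 7*v 7)*u 1 - (w 0*u 0+w 1*u 1+w 2*u 2+w 3*u 3+w 4*u 4+w 5*u 5+w 6*u 6+w 7*u 7)*v 1)*huv + ((v 0*v 0+v 1*v 1+v 2*v 2+v 3*v 3+v 4*v 4+v 5*v 5+v 6*v 6+v 7*v 7)*u 1)*hwu + ((u 0*u 0+u 1*u 1+u 2*u 2+u 3*u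 3+u 4*u 4+u 5*u 5+u 6*u 6+u 7*u 7)*v 1)*hwv
    have h2 : P u v (P u v w) 2 = -(w 2) := by
      simp only [P_app_0, P_app_1, P_app_2, P_app_3, P_app_4, P_app_5, P_app_6, P_app_7]
      linear_combination (-(v 0*v 0+v 1*v 1+v 2*v 2+v 3*v 3+v 4*v 4+v 5*v 5+v 6*v 6+v 7*v 7)*w 2)*hp + (-(w 2))*hq + ((u 0*v 0+u 1*v 1+u 2*v 2+u 3*v 3+u 4*v 4+u 5*v 5+u 6*v 6+u 7*v 7)*w 2 - (w 0*v 0+w 1*v 1+w 2*v 2+w 3*v 3+w 4*v 4+w 5*v 5+w 6*v 6+w 7*v 7)*u 2 - (w 0*u 0+w 1*u 1+w 2*u 2+w 3*u 3+w 4*u 4+w 5*u 5+w 6*u 6+w 7*u 7)*v 2)*huv + ((v 0*v 0+v 1*v 1+v 2*v 2+v 3*v 3+v 4*v 4+v 5*v 5+v 6*v 6+v 7*v 7)*u 2)*hwu + ((u 0*u 0+u 1*u 1+u 2*u 2+u 3*u 3+u 4*u 4+u 5*u 5+u 6*u 6+u 7*u 7)*v 2)*hwv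
    have h3 : P u v (P u v w) 3 = -(w 3) := by
      simp only [P_app_0, P_app_1, P_app_2, P_app_3, P_app_4, P_app_5, P_app_6, P_app_7]
      linear_combination (-(v 0*v 0+v 1*v 1+v 2*v 2+v 3*v 3+v 4*v 4+v 5*v 5+v 6*v 6+v 7*v 7)*w 3)*hp + (-(w 3))*hq + ((u 0*v 0+u 1*v 1+u 2*v 2+u 3*v 3+u 4*v 4+u 5*v 5+u 6*v 6+u 7*v 7)*w 3 - (w 0*v 0+w 1*v 1+w 2*v 2+w 3*v 3+w 4*v 4+w 5*v 5+w 6*v 6+w 7*v 7)*u 3 - (w 0*u 0+w 1*u 1+w 2*u 2+w 3*u 3+w 4*u 4+w 5*u 5+w 6*u 6+w 7*u 7)*v 3)*huv + ((v 0*v 0+v 1*v 1+v 2*v 2+v 3*v 3+v 4*v 4+v 5*v 5+v 6*v 6+v 7*v 7)*u 3)*hwu + ((u 0*u 0+u 1*u 1+u 2*u 2+u 3*u 3+u 4*u 4+u 5*u 5+u 6*u 6+u 7*u 7)*v 3)*hwv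
    have h4 : P u v (P u v w) 4 = -(w 4) := by
      simp only [P_app_0, P_app_1, P_app_2, P_app_3, P_app_4, P_app_5, P_app_6, P_app_7]
      linear_combination (-(v 0*v 0+v 1*v 1+v 2*v 2+v 3*v 3+v 4*v 4+v 5*v 5+v 6*v 6+v 7*v 7)*w 4)*hp + (-(w 4))*hq + ((u 0*v 0+u 1*v 1+u 2*v 2+u 3*v 3+u 4*v 4+u 5*v 5+u 6*v 6+u 7*v 7)*w 4 - (w 0*v 0+w 1*v 1+w 2*v 2+w 3*v 3+w 4*v 4+w 5*v 5+w 6*v 6+w 7*v 7)*u 4 - (w 0*u 0+w 1*u 1+w 2*u 2+w 3*u 3+w 4*u 4+w 5*u 5+w 6*u 6+w 7*u 7)*v 4)*huv + ((v 0*v 0+v 1*v 1+v 2*v 2+v 3*v 3+v 4*v 4+v 5*v 5+v 6*v 6+v 7*v 7)*u 4)*hwu + ((u 0*u 0+u 1*u 1+u 2*u 2+u 3*u 3+u 4*u 4+u 5*u 5+u 6*u 6+u 7*u 7)*v 4)*hwv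
    have h5 : P u v (P u v w) 5 = -(w 5) := by
      simp only [P_app_0, P_app_1, P_app_2, P_app_3, P_app_4, P_app_5, P_app_6, P_app_7]
      linear_combination (-(v 0*v 0+v 1*v 1+v 2*v 2+v 3*v 3+v 4*v 4+v 5*v 5+v 6*v 6+v 7*v 7)*w 5)*hp + (-(w 5))*hq + ((u 0*v 0+u 1*v 1+u 2*v 2+u 3*v 3+u 4*v 4+u 5*v 5+u 6*v 6+u 7*v 7)*w 5 - (w 0*v 0+w 1*v 1+w 2*v 2+w 3*v 3+w 4*v 4+w 5*v 5+w 6*v 6+w 7*v 7)*u 5 - (w 0*u 0+w 1*u 1+w 2*u 2+w 3*u 3+w 4*u 4+w 5*u 5+w 6*u 6+w 7*u 7)*v 5)*huv + ((v 0*v 0+v 1*v 1+v 2*v 2+v 3*v 3+v 4*v 4+v 5*v 5+v 6*v 6+v 7*v 7)*u 5)*hwu + ((u 0*u 0+u 1*u 1+u 2*u 2+u 3*u 3+u 4*u 4+u 5*u 5+u 6*u 6+u 7*u 7)*v 5)*hwv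
    have h6 : P u v (P u v w) 6 = -(w 6) := by
      simp only [P_app_0, P_app_1, P_app_2, P_app_3, P_app_4, P_app_5, P_app_6, P_app_7]
      linear_combination (-(v 0*v 0+v 1*v 1+v 2*v 2+v 3*v 3+v 4*v 4+v 5*v 5+v 6*v 6+v 7*v 7)*w 6)*hp + (-(w 6))*hq + ((u 0*v 0+u 1*v 1+u 2*v 2+u 3*v 3+u 4*v 4+u 5*v 5+u 6*v 6+u 7*v 7)*w 6 - (w 0*v 0+w 1*v 1+w 2*v 2+w 3*v 3+w 4*v 4+w 5*v 5+w 6*v 6+w 7*v 7)*u 6 - (w 0*u 0+w 1*u 1+w 2*u 2+w 3*u 3+w 4*u 4+w 5*u 5+w 6*u 6+w 7*u 7)*v 6)*huv + ((v 0*v 0+v 1*v 1+v 2*v 2+v 3*v 3+v 4*v 4+v 5*v 5+v 6*v 6+v 7*v 7)*u 6)*hwu + ((u 0*u 0+u 1*u 1+u 2*u 2+u 3*u 3+u 4*u 4+u 5*u 5+u 6*u 6+u 7*u 7)*v 6)*hwv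
    have h7 : P u v (P u v w) 7 = -(w 7) := by
      simp only [P_app_0, P_app_1, P_app_2, P_app_3, P_app_4, P_app_5, P_app_6, P_app_7]
      linear_combination (-(v 0*v 0+v 1*v 1+v 2*v 2+v 3*v 3+v 4*v 4+v 5*v 5+v 6*v 6+v 7*v 7)*w 7)*hp + (-(w 7))*hq + ((u 0*v 0+u 1*v 1+u 2*v 2+u 3*v 3+u 4*v 4+u 5*v 5+u 6*v 6+u 7*v 7)*w 7 - (w 0*v 0+w 1*v 1+w 2*v 2+w 3*v 3+w 4*v 4+w 5*v 5+w 6*v 6+w 7*v 7)*u 7 - (w 0*u 0+w 1*u 1+w 2*u 2+w 3*u 3+w 4*u 4+w 5*u 5+w 6*u 6+w 7*u 7)*v 7)*huv + ((v 0*v 0+v 1*v 1+v 2*v 2+v 3*v 3+v 4*v 4+v 5*v 5+v 6*v 6+v 7*v 7)*u 7)*hwu + ((u 0*u 0+u 1*u 1+u 2*u 2+u 3*u 3+u 4*u 4+u 5*u 5+u 6*u 6+u 7*u 7)*v 7)*hwv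
    ext i
    simp only [PiLp.neg_apply]
    fin_cases i
    exacts [h0, h1, h2, h3, h4, h5, h6, h7]
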